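/- For each index i, the real function f(t) = ℓ(μ(t), B, ν), where μ(t) is μ with its i-th coordinate replaced by t, is differentiable at t = μ_i and its derivative equals ((ν + D)/(ν + q)) · (Ω·(y − μ))_i. -/

import Mathlib

open Matrix

/-- Multivariate t log-likelihood in the Cholesky precision parametrization `Ω = Bᵀ B`:
`ℓ(μ, B, ν) = log Γ((ν+D)/2) - log Γ(ν/2) - (D/2)·log ν - (D/2)·log π + log(det B)
  - ((ν+D)/2)·log(1 + q/ν)` with `q = ‖B(y-μ)‖²`. -/
noncomputable def tCholLL (D : ℕ) (y μ : Fin D → ℝ)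
    (B : Matrix (Fin D) (Fin D) ℝ) (ν : ℝ) : ℝ :=
  Real.log (Real.Gamma ((ν + D) / 2)) - Real.log (Real.Gamma (ν / 2))
    - ((D : ℝ) / 2) * Real.log ν - ((D : ℝ) / 2) * Real.log Real.pi
    + Real.log B.det
    - ((ν + D) / 2) * Real.log (1 + (∑ k, (B.mulVec (y - μ) k) ^ 2) / ν)

/-- First partial derivative of the multivariate t log-likelihood with respect to the
`i`-th coordinate of the location `μ`: it equals `((ν + D)/(ν + q))·(Ω·(y - μ))_i` with
`Ω = Bᵀ B` and `q = ‖B(y-μ)‖²`. -/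
theorem tChol_deriv_mu (D : ℕ) (hD : 1 ≤ D) (y μ : Fin D → ℝ) (ν : ℝ) (hν : 0 < ν)
    (B : Matrix (Fin D) (Fin D) ℝ)
    (hLT : ∀ k l : Fin D, k < l → B k l = 0)
    (hdiag : ∀ k, 0 < B k k) (i : Fin D) :
    HasDerivAt (fun t : ℝ => tCholLL D y (Function.update μ i t) B ν)
      ((ν + D) / (ν + ∑ k, (B.mulVec (y - μ) k) ^ 2) *
        ((B.transpose * B).mulVec (y - μ) i))
      (μ i) := by
  set z : Fin D → ℝ := B.mulVec (y - μ) with hz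
  set q : ℝ := ∑ k, z k ^ 2 with hq
  have hqnn : 0 ≤ q := Finset.sum_nonneg fun k _ => sq_nonneg _
  have hνq : ν + q ≠ 0 := by positivity
  have hν' : (ν : ℝ) ≠ 0 := ne_of_gt hν
  have hw : (B.transpose * B).mulVec (y - μ) i = ∑ k, B k i * z k := by
    rw [← Matrix.mulVec_mulVec]
    simp only [Matrix.mulVec, dotProduct, Matrix.transpose_apply, hz, Pi.sub_apply]
  -- key pointwise formula
  have key : ∀ t : ℝ, ∀ k : Fin D,
      B.mulVec (y - Function.update μ i t) k = z k - B k i * (t - μ i) := by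
    intro t k
    simp only [hz, Matrix.mulVec, dotProduct, Pi.sub_apply]
    have : ∀ l : Fin D, B k l * (y l - Function.update μ i t l)
        = B k l * (y l - μ l) - (if l = i then B k i * (t - μ i) else 0) := by
      intro l
      by_cases hl : l = i
      · subst hl; simp [Function.update_self]; ring
      · simp [Function.update_of_ne hl, hl]
    rw [Finset.sum_congr rfl fun l _ => this l, Finset.sum_sub_distrib,
      Finset.sum_ite_eq' Finset.univ i fun _ => B k i * (t - μ i)]
    simp
  -- derivative of inner sum
  have hg : HasDerivAt (fun t : ℝ => ∑ k, (z k - B k i * (t - μ i)) ^ 2)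
      (∑ k, 2 * z k * (-(B k i))) (μ i) := by
    apply HasDerivAt.fun_sum
    intro k _
    have h1 : HasDerivAt (fun t : ℝ => z k - B k i * (t - μ i)) (-(B k i)) (μ i) := by
      have := (((hasDerivAt_id (μ i)).sub_const (μ i)).const_mul (B k i)).const_sub (z k)
      simpa using this
    have := h1.fun_pow 2
    simpa using this
  have hge : (fun t : ℝ => ∑ k, (z k - B k i * (t - μ i)) ^ 2) (μ i) = q := by
    simp [hq]
  -- derivative of log term argument
  have harg : HasDerivAt (fun t : ℝ => 1 + (∑ k, (z k - B k i * (t - μ i)) ^ 2) / ν)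
      ((∑ k, 2 * z k * (-(B k i))) / ν) (μ i) := (hg.div_const ν).const_add 1
  have hargval : 1 + (∑ k, (z k - B k i * (μ i - μ i)) ^ 2) / ν = 1 + q / ν := by
    simp [hq]
  have hargpos : (0:ℝ) < 1 + q / ν := by positivity
  have hlog : HasDerivAt
      (fun t : ℝ => Real.log (1 + (∑ k, (z k - B k i * (t - μ i)) ^ 2) / ν))
      (((∑ k, 2 * z k * (-(B k i))) / ν) / (1 + q / ν)) (μ i) := by
    have := harg.log (by rw [show (1 + (∑ k, (z k - B k i * (μ i - μ i)) ^ 2) / ν) = 1 + q / ν from hargval]; exact ne_of_gt hargpos)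
    simpa [hargval] using this
  -- assemble
  set C : ℝ := Real.log (Real.Gamma ((ν + D) / 2)) - Real.log (Real.Gamma (ν / 2))
    - ((D : ℝ) / 2) * Real.log ν - ((D : ℝ) / 2) * Real.log Real.pi
    + Real.log B.det with hC
  have hfull : HasDerivAt
      (fun t : ℝ => C - ((ν + D) / 2) *
        Real.log (1 + (∑ k, (z k - B k i * (t - μ i)) ^ 2) / ν))
      (-(((ν + D) / 2) * (((∑ k, 2 * z k * (-(B k i))) / ν) / (1 + q / ν)))) (μ i) := by
    have := (hlog.const_mul ((ν + D) / 2)).const_sub C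
    simpa using this
  have hfeq : (fun t : ℝ => tCholLL D y (Function.update μ i t) B ν)
      = (fun t : ℝ => C - ((ν + D) / 2) *
        Real.log (1 + (∑ k, (z k - B k i * (t - μ i)) ^ 2) / ν)) := by
    funext t
    simp only [tCholLL, hC]
    have hs : (∑ k, (B.mulVec (y - Function.update μ i t) k) ^ 2)
        = ∑ k, (z k - B k i * (t - μ i)) ^ 2 :=
      Finset.sum_congr rfl fun k _ => by rw [key t k]
    rw [hs]
  rw [hfeq, hw]
  convert hfull using 1
  have hsum : ∑ k, 2 * z k * (-(B k i)) = -2 * ∑ k, B k i * z k := by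
    rw [Finset.mul_sum]
    exact Finset.sum_congr rfl fun k _ => by ring
  rw [hsum]
  have h1q : 1 + q / ν = (ν + q) / ν := by field_simp
  rw [h1q]
  field_simp
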